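/- Let h : ℝ² → ℝ be C³, let A : ℝ² → ℝ² be an invertible linear map, and let x ∈ ℝ² satisfy K₂(h)(A x) ≠ 0. Then A(λ̂(h ∘ A)(x)) = λ̂(h)(A x), where λ̂(h)(x) = (3·K₃(h)(x)/(2·K₂(h)(x)²)) · w_h(x). -/

import Mathlib

/-- First partial derivative of `h : ℝ² → ℝ` in the `i`-th coordinate direction. -/
noncomputable def pd1 (h : (Fin 2 → ℝ) → ℝ) (i : Fin 2) (x : Fin 2 → ℝ) : ℝ :=
  fderiv ℝ h x (Pi.single i 1)

/-- Second partial derivative of `h : ℝ² → ℝ`. -/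
noncomputable def pd2 (h : (Fin 2 → ℝ) → ℝ) (i j : Fin 2) (x : Fin 2 → ℝ) : ℝ :=
  iteratedFDeriv ℝ 2 h x ![Pi.single i 1, Pi.single j 1]

/-- Third partial derivative of `h : ℝ² → ℝ`. -/
noncomputable def pd3 (h : (Fin 2 → ℝ) → ℝ) (i j m : Fin 2) (x : Fin 2 → ℝ) : ℝ :=
  iteratedFDeriv ℝ 3 h x ![Pi.single i 1, Pi.single j 1, Pi.single m 1]

/-- The rotated gradient `w_h(x) = (h₂(x), −h₁(x))`. -/
noncomputable def wrot (h : (Fin 2 → ℝ) → ℝ) (x : Fin 2 → ℝ) : Fin 2 → ℝ :=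
  ![pd1 h 1 x, -pd1 h 0 x]

/-- `K₂(h) = (1/2)(h₁₁h₂² − 2h₁₂h₁h₂ + h₂₂h₁²)`. -/
noncomputable def K2 (h : (Fin 2 → ℝ) → ℝ) (x : Fin 2 → ℝ) : ℝ :=
  (1 / 2) * (pd2 h 0 0 x * (pd1 h 1 x) ^ 2 - 2 * pd2 h 0 1 x * pd1 h 0 x * pd1 h 1 x +
    pd2 h 1 1 x * (pd1 h 0 x) ^ 2)

/-- `K₃(h) = (1/6)(h₁₁₁h₂³ − 3h₁₁₂h₂²h₁ + 3h₁₂₂h₂h₁² − h₂₂₂h₁³)`. -/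
noncomputable def K3 (h : (Fin 2 → ℝ) → ℝ) (x : Fin 2 → ℝ) : ℝ :=
  (1 / 6) * (pd3 h 0 0 0 x * (pd1 h 1 x) ^ 3 -
    3 * pd3 h 0 0 1 x * (pd1 h 1 x) ^ 2 * pd1 h 0 x +
    3 * pd3 h 0 1 1 x * pd1 h 1 x * (pd1 h 0 x) ^ 2 -
    pd3 h 1 1 1 x * (pd1 h 0 x) ^ 3)

/-- The paper's invariant vector field `λ̂(h)(x) = (3K₃(h)(x)/(2K₂(h)(x)²))·w_h(x)`. -/
noncomputable def lamhat (h : (Fin 2 → ℝ) → ℝ) (x : Fin 2 → ℝ) : Fin 2 → ℝ :=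
  (3 * K3 h x / (2 * (K2 h x) ^ 2)) • wrot h x

abbrev E2 := Fin 2 → ℝ

lemma vec_expand (v : E2) : v = v 0 • (Pi.single 0 1 : E2) + v 1 • (Pi.single 1 1 : E2) := by
  funext i; fin_cases i <;> simp

lemma clm_expand {M : Type*} [NormedAddCommGroup M] [NormedSpace ℝ M]
    (L : E2 →L[ℝ] M) (v : E2) :
    L v = v 0 • L (Pi.single 0 1) + v 1 • L (Pi.single 1 1) := by
  conv_lhs => rw [vec_expand v]
  simp

lemma iter2_eq (h : E2 → ℝ) (y : E2) (v w : E2) :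
    iteratedFDeriv ℝ 2 h y ![v, w] = fderiv ℝ (fderiv ℝ h) y v w := by
  rw [iteratedFDeriv_two_apply]; simp

lemma iter3_eq (h : E2 → ℝ) (y : E2) (u v w : E2) :
    iteratedFDeriv ℝ 3 h y ![u, v, w] = fderiv ℝ (fderiv ℝ (fderiv ℝ h)) y u v w := by
  have h1 : (Fin.init ![u, v, w]) = ![u, v] := by
    funext i; fin_cases i <;> rfl
  rw [iteratedFDeriv_succ_apply_right, h1, iteratedFDeriv_two_apply]
  rfl

lemma pd1_eq (h : E2 → ℝ) (i : Fin 2) (y : E2) :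
    pd1 h i y = fderiv ℝ h y (Pi.single i 1) := rfl

lemma pd2_eq (h : E2 → ℝ) (i j : Fin 2) (y : E2) :
    pd2 h i j y = fderiv ℝ (fderiv ℝ h) y (Pi.single i 1) (Pi.single j 1) := iter2_eq h y _ _

lemma pd3_eq (h : E2 → ℝ) (i j m : Fin 2) (y : E2) :
    pd3 h i j m y = fderiv ℝ (fderiv ℝ (fderiv ℝ h)) y (Pi.single i 1) (Pi.single j 1)
      (Pi.single m 1) := iter3_eq h y _ _ _

lemma d2_symm {h : E2 → ℝ} (hh : ContDiff ℝ 3 h) (z v w : E2) :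
    fderiv ℝ (fderiv ℝ h) z v w = fderiv ℝ (fderiv ℝ h) z w v :=
  ((hh.contDiffAt).isSymmSndFDerivAt (by norm_num)).eq v w

lemma d3_symm12 {h : E2 → ℝ} (hh : ContDiff ℝ 3 h) (z u v w : E2) :
    fderiv ℝ (fderiv ℝ (fderiv ℝ h)) z u v w = fderiv ℝ (fderiv ℝ (fderiv ℝ h)) z v u w := by
  have h2 : ContDiff ℝ 2 (fderiv ℝ h) := hh.fderiv_right (by norm_num)
  have h1 : ContDiff ℝ 1 (fderiv ℝ (fderiv ℝ h)) := h2.fderiv_right (by norm_num)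
  have key := second_derivative_symmetric (f := fderiv ℝ h) (f' := fderiv ℝ (fderiv ℝ h))
    (f'' := fderiv ℝ (fderiv ℝ (fderiv ℝ h)) z)
    (fun y => (h2.differentiable (by norm_num) y).hasFDerivAt)
    ((h1.differentiable (by norm_num) z).hasFDerivAt) u v
  exact congrArg (fun L => L w) key

lemma fderiv_eval {F : Type*} [NormedAddCommGroup F] [NormedSpace ℝ F]
    {G : E2 → (E2 →L[ℝ] F)} {z : E2} (hG : DifferentiableAt ℝ G z) (v : E2) :
    fderiv ℝ (fun y => G y v) z = (fderiv ℝ G z).flip v := by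
  rw [show (fun y => G y v) = fun y => (G y) ((fun _ : E2 => v) y) from rfl,
    fderiv_clm_apply hG (differentiableAt_const v)]
  simp

lemma fderiv_eval2 {G : E2 → (E2 →L[ℝ] (E2 →L[ℝ] ℝ))} {z : E2}
    (hG : Differentiable ℝ G) (u v w : E2) :
    fderiv ℝ (fun y => G y v w) z u = fderiv ℝ G z u v w := by
  have h1 : Differentiable ℝ (fun y => G y v) :=
    fun t => (hG t).clm_apply (differentiableAt_const v)
  rw [show (fun y => G y v w) = (fun y => (fun t => G t v) y w) from rfl,
    fderiv_eval (h1 z) w, fderiv_eval (hG z) v]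
  simp

lemma d3_symm23 {h : E2 → ℝ} (hh : ContDiff ℝ 3 h) (z u v w : E2) :
    fderiv ℝ (fderiv ℝ (fderiv ℝ h)) z u v w = fderiv ℝ (fderiv ℝ (fderiv ℝ h)) z u w v := by
  have h2 : ContDiff ℝ 2 (fderiv ℝ h) := hh.fderiv_right (by norm_num)
  have hd : Differentiable ℝ (fderiv ℝ (fderiv ℝ h)) :=
    (h2.fderiv_right (m := 1) (by norm_num)).differentiable (by norm_num)
  rw [← fderiv_eval2 hd u v w, ← fderiv_eval2 hd u w v]
  have : (fun y => fderiv ℝ (fderiv ℝ h) y v w) = (fun y => fderiv ℝ (fderiv ℝ h) y w v) :=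
    funext fun t => d2_symm hh t v w
  rw [this]

lemma clm_expand2 (L : E2 →L[ℝ] E2 →L[ℝ] ℝ) (v w : E2) :
    L v w = v 0 * w 0 * L (Pi.single 0 1) (Pi.single 0 1)
      + v 0 * w 1 * L (Pi.single 0 1) (Pi.single 1 1)
      + v 1 * w 0 * L (Pi.single 1 1) (Pi.single 0 1)
      + v 1 * w 1 * L (Pi.single 1 1) (Pi.single 1 1) := by
  have e := clm_expand (M := E2 →L[ℝ] ℝ) L v
  rw [e]
  simp only [ContinuousLinearMap.add_apply, ContinuousLinearMap.smul_apply, smul_eq_mul]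
  rw [clm_expand (L (Pi.single 0 1)) w, clm_expand (L (Pi.single 1 1)) w]
  simp only [smul_eq_mul]; ring

lemma clm_expand3 (L : E2 →L[ℝ] E2 →L[ℝ] E2 →L[ℝ] ℝ) (u v w : E2) :
    L u v w = u 0 * v 0 * w 0 * L (Pi.single 0 1) (Pi.single 0 1) (Pi.single 0 1)
      + u 0 * v 0 * w 1 * L (Pi.single 0 1) (Pi.single 0 1) (Pi.single 1 1)
      + u 0 * v 1 * w 0 * L (Pi.single 0 1) (Pi.single 1 1) (Pi.single 0 1)
      + u 0 * v 1 * w 1 * L (Pi.single 0 1) (Pi.single 1 1) (Pi.single 1 1)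
      + u 1 * v 0 * w 0 * L (Pi.single 1 1) (Pi.single 0 1) (Pi.single 0 1)
      + u 1 * v 0 * w 1 * L (Pi.single 1 1) (Pi.single 0 1) (Pi.single 1 1)
      + u 1 * v 1 * w 0 * L (Pi.single 1 1) (Pi.single 1 1) (Pi.single 0 1)
      + u 1 * v 1 * w 1 * L (Pi.single 1 1) (Pi.single 1 1) (Pi.single 1 1) := by
  have e := clm_expand (M := E2 →L[ℝ] E2 →L[ℝ] ℝ) L u
  rw [e]
  simp only [ContinuousLinearMap.add_apply, ContinuousLinearMap.smul_apply, smul_eq_mul]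
  rw [clm_expand2 (L (Pi.single 0 1)) v w, clm_expand2 (L (Pi.single 1 1)) v w]
  ring

lemma d1_expand (h : E2 → ℝ) (y v : E2) :
    fderiv ℝ h y v = v 0 * pd1 h 0 y + v 1 * pd1 h 1 y := by
  rw [clm_expand (fderiv ℝ h y) v]
  simp only [smul_eq_mul, pd1_eq]

lemma d2_expand {h : E2 → ℝ} (hh : ContDiff ℝ 3 h) (y v w : E2) :
    fderiv ℝ (fderiv ℝ h) y v w = v 0 * w 0 * pd2 h 0 0 y
      + (v 0 * w 1 + v 1 * w 0) * pd2 h 0 1 y + v 1 * w 1 * pd2 h 1 1 y := by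
  rw [clm_expand2 (fderiv ℝ (fderiv ℝ h) y) v w,
    d2_symm hh y (Pi.single 1 1) (Pi.single 0 1)]
  simp only [← pd2_eq]
  ring

lemma d3_expand {h : E2 → ℝ} (hh : ContDiff ℝ 3 h) (y u v w : E2) :
    fderiv ℝ (fderiv ℝ (fderiv ℝ h)) y u v w
      = u 0 * v 0 * w 0 * pd3 h 0 0 0 y
      + (u 0 * v 0 * w 1 + u 0 * v 1 * w 0 + u 1 * v 0 * w 0) * pd3 h 0 0 1 y
      + (u 0 * v 1 * w 1 + u 1 * v 0 * w 1 + u 1 * v 1 * w 0) * pd3 h 0 1 1 y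
      + u 1 * v 1 * w 1 * pd3 h 1 1 1 y := by
  have s1 : fderiv ℝ (fderiv ℝ (fderiv ℝ h)) y (Pi.single 0 1) (Pi.single 1 1) (Pi.single 0 1)
      = fderiv ℝ (fderiv ℝ (fderiv ℝ h)) y (Pi.single 0 1) (Pi.single 0 1) (Pi.single 1 1) :=
    d3_symm23 hh y _ _ _
  have s2 : fderiv ℝ (fderiv ℝ (fderiv ℝ h)) y (Pi.single 1 1) (Pi.single 0 1) (Pi.single 0 1)
      = fderiv ℝ (fderiv ℝ (fderiv ℝ h)) y (Pi.single 0 1) (Pi.single 0 1) (Pi.single 1 1) :=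
    (d3_symm12 hh y _ _ _).trans s1
  have s3 : fderiv ℝ (fderiv ℝ (fderiv ℝ h)) y (Pi.single 1 1) (Pi.single 0 1) (Pi.single 1 1)
      = fderiv ℝ (fderiv ℝ (fderiv ℝ h)) y (Pi.single 0 1) (Pi.single 1 1) (Pi.single 1 1) :=
    d3_symm12 hh y _ _ _
  have s4 : fderiv ℝ (fderiv ℝ (fderiv ℝ h)) y (Pi.single 1 1) (Pi.single 1 1) (Pi.single 0 1)
      = fderiv ℝ (fderiv ℝ (fderiv ℝ h)) y (Pi.single 0 1) (Pi.single 1 1) (Pi.single 1 1) :=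
    (d3_symm23 hh y _ _ _).trans s3
  rw [clm_expand3 (fderiv ℝ (fderiv ℝ (fderiv ℝ h)) y) u v w, s1, s2, s3, s4]
  simp only [← pd3_eq]
  ring

lemma comp_pd1 {h : E2 → ℝ} (hh : ContDiff ℝ 3 h) (A : E2 →ₗ[ℝ] E2) (x : E2) (i : Fin 2) :
    pd1 (fun y => h (A y)) i x = fderiv ℝ h (A x) (A (Pi.single i 1)) := by
  have hc : (fun y => h (A y)) = h ∘ (LinearMap.toContinuousLinearMap A) := by
    funext z; simp
  rw [pd1, hc, fderiv_comp x ((hh.differentiable (by norm_num)).differentiableAt)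
    (LinearMap.toContinuousLinearMap A).differentiableAt,
    (LinearMap.toContinuousLinearMap A).fderiv]
  simp

lemma comp_pd2 {h : E2 → ℝ} (hh : ContDiff ℝ 3 h) (A : E2 →ₗ[ℝ] E2) (x : E2) (i j : Fin 2) :
    pd2 (fun y => h (A y)) i j x
      = fderiv ℝ (fderiv ℝ h) (A x) (A (Pi.single i 1)) (A (Pi.single j 1)) := by
  have hc : (fun y => h (A y)) = h ∘ (LinearMap.toContinuousLinearMap A) := by
    funext z; simp
  rw [pd2, hc, ContinuousLinearMap.iteratedFDeriv_comp_right _ hh x (by norm_num),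
    ContinuousMultilinearMap.compContinuousLinearMap_apply]
  have harg : (fun k => (LinearMap.toContinuousLinearMap A) (![Pi.single i 1, Pi.single j 1] k))
      = ![A (Pi.single i 1), A (Pi.single j 1)] := by
    funext k; fin_cases k <;> simp
  rw [harg, show (LinearMap.toContinuousLinearMap A) x = A x by simp, iter2_eq]

lemma comp_pd3 {h : E2 → ℝ} (hh : ContDiff ℝ 3 h) (A : E2 →ₗ[ℝ] E2) (x : E2) (i j m : Fin 2) :
    pd3 (fun y => h (A y)) i j m x
      = fderiv ℝ (fderiv ℝ (fderiv ℝ h)) (A x) (A (Pi.single i 1)) (A (Pi.single j 1))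
        (A (Pi.single m 1)) := by
  have hc : (fun y => h (A y)) = h ∘ (LinearMap.toContinuousLinearMap A) := by
    funext z; simp
  rw [pd3, hc, ContinuousLinearMap.iteratedFDeriv_comp_right _ hh x (by norm_num),
    ContinuousMultilinearMap.compContinuousLinearMap_apply]
  have harg : (fun k => (LinearMap.toContinuousLinearMap A)
      (![Pi.single i 1, Pi.single j 1, Pi.single m 1] k))
      = ![A (Pi.single i 1), A (Pi.single j 1), A (Pi.single m 1)] := by
    funext k; fin_cases k <;> simp
  rw [harg, show (LinearMap.toContinuousLinearMap A) x = A x by simp, iter3_eq]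

/-- Equivariance of the invariant vector field `λ̂` under linear changes of variables:
`A(λ̂(h∘A)(x)) = λ̂(h)(Ax)`. -/
theorem lamhat_equivariance (h : (Fin 2 → ℝ) → ℝ) (hh : ContDiff ℝ 3 h)
    (A : (Fin 2 → ℝ) →ₗ[ℝ] (Fin 2 → ℝ)) (hA : LinearMap.det A ≠ 0)
    (x : Fin 2 → ℝ) (hx : K2 h (A x) ≠ 0) :
    A (lamhat (fun y => h (A y)) x) = lamhat h (A x) := by
  have f1 : ∀ i, pd1 (fun y => h (A y)) i x
      = A (Pi.single i 1) 0 * pd1 h 0 (A x) + A (Pi.single i 1) 1 * pd1 h 1 (A x) := by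
    intro i; rw [comp_pd1 hh, d1_expand]
  have f2 : ∀ i j, pd2 (fun y => h (A y)) i j x
      = A (Pi.single i 1) 0 * A (Pi.single j 1) 0 * pd2 h 0 0 (A x)
      + (A (Pi.single i 1) 0 * A (Pi.single j 1) 1
         + A (Pi.single i 1) 1 * A (Pi.single j 1) 0) * pd2 h 0 1 (A x)
      + A (Pi.single i 1) 1 * A (Pi.single j 1) 1 * pd2 h 1 1 (A x) := by
    intro i j; rw [comp_pd2 hh, d2_expand hh]
  have f3 : ∀ i j m, pd3 (fun y => h (A y)) i j m x
      = A (Pi.single i 1) 0 * A (Pi.single j 1) 0 * A (Pi.single m 1) 0 * pd3 h 0 0 0 (A x)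
      + (A (Pi.single i 1) 0 * A (Pi.single j 1) 0 * A (Pi.single m 1) 1
         + A (Pi.single i 1) 0 * A (Pi.single j 1) 1 * A (Pi.single m 1) 0
         + A (Pi.single i 1) 1 * A (Pi.single j 1) 0 * A (Pi.single m 1) 0) * pd3 h 0 0 1 (A x)
      + (A (Pi.single i 1) 0 * A (Pi.single j 1) 1 * A (Pi.single m 1) 1
         + A (Pi.single i 1) 1 * A (Pi.single j 1) 0 * A (Pi.single m 1) 1
         + A (Pi.single i 1) 1 * A (Pi.single j 1) 1 * A (Pi.single m 1) 0) * pd3 h 0 1 1 (A x)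
      + A (Pi.single i 1) 1 * A (Pi.single j 1) 1 * A (Pi.single m 1) 1 * pd3 h 1 1 1 (A x) := by
    intro i j m; rw [comp_pd3 hh, d3_expand hh]
  have hdet : LinearMap.det A
      = A (Pi.single 0 1) 0 * A (Pi.single 1 1) 1 - A (Pi.single 1 1) 0 * A (Pi.single 0 1) 1 := by
    rw [← LinearMap.det_toMatrix (Pi.basisFun ℝ (Fin 2)), Matrix.det_fin_two]
    simp [LinearMap.toMatrix_apply]
  have hK2 : K2 (fun y => h (A y)) x
      = (A (Pi.single 0 1) 0 * A (Pi.single 1 1) 1 - A (Pi.single 1 1) 0 * A (Pi.single 0 1) 1) ^ 2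
        * K2 h (A x) := by
    simp only [K2, f1, f2]; ring
  have hK3 : K3 (fun y => h (A y)) x
      = (A (Pi.single 0 1) 0 * A (Pi.single 1 1) 1 - A (Pi.single 1 1) 0 * A (Pi.single 0 1) 1) ^ 3
        * K3 h (A x) := by
    simp only [K3, f1, f3]; ring
  have hAv : ∀ (v : E2) (i : Fin 2),
      A v i = v 0 * A (Pi.single 0 1) i + v 1 * A (Pi.single 1 1) i := by
    intro v i
    conv_lhs => rw [vec_expand v]
    simp
  rw [hdet] at hA
  have key : A (lamhat (fun y => h (A y)) x)
      = (3 * K3 (fun y => h (A y)) x / (2 * (K2 (fun y => h (A y)) x) ^ 2))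
        • A (wrot (fun y => h (A y)) x) := by
    rw [lamhat, map_smul]
  rw [key, hK2, hK3]
  funext i
  simp only [Pi.smul_apply, smul_eq_mul]
  rw [hAv (wrot (fun y => h (A y)) x) i]
  simp only [lamhat, wrot, Matrix.cons_val_zero, Matrix.cons_val_one, Matrix.head_cons, f1,
    Pi.smul_apply, smul_eq_mul]
  fin_cases i <;>
  · simp only [Fin.zero_eta, Fin.mk_one, Fin.isValue, Matrix.cons_val_zero, Matrix.cons_val_one, Matrix.head_cons]
    field_simp
    ring
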